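/- arXiv:1910.09499 — 2 statements merged into one kernel-verified Lean document; each statement's English description precedes it below -/
import Mathlib

section
/- Let y be a random variable with density p(y|θ) = c(y,φ)·exp((yθ − b(θ))/φ) (a one-parameter exponential family with dispersion φ > 0), and suppose sup_{θ∈ℝ} b''(θ) ≤ U for some U > 0. Then the residual ε = y − b'(θ) is sub-Gaussian with variance proxy φU; that is, for all t ∈ ℝ, E[exp(tε)] ≤ exp(φU t² / 2). -/
open MeasureTheory Real

lemma taylor_bd (b : ℝ → ℝ) (U θ : ℝ) (hb1 : Differentiable ℝ b)
    (hb2 : Differentiable ℝ (deriv b)) (hbU : ∀ x : ℝ, deriv (deriv b) x ≤ U)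
    (h : ℝ) : b (θ + h) - b θ - h * deriv b θ ≤ U * h ^ 2 / 2 := by
  set q : ℝ → ℝ := fun x => U * x ^ 2 / 2 + x * deriv b θ + b θ - b (θ + x) with hq
  have hshift : ∀ x : ℝ, HasDerivAt (fun y : ℝ => θ + y) 1 x := fun x =>
    (hasDerivAt_id x).const_add θ
  have hdq : ∀ x : ℝ, HasDerivAt q (U * x + deriv b θ - deriv b (θ + x)) x := by
    intro x
    have h1 : HasDerivAt (fun y : ℝ => U * y ^ 2 / 2) (U * x) x := by
      have : HasDerivAt (fun y : ℝ => U * y ^ 2 / 2) _ x := ((hasDerivAt_pow 2 x).const_mul U).div_const 2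
      convert this using 1
      ring
    have h2 : HasDerivAt (fun y : ℝ => y * deriv b θ) (deriv b θ) x :=
      hasDerivAt_mul_const _
    have h3 : HasDerivAt (fun y : ℝ => b (θ + y)) (deriv b (θ + x)) x := by
      have := ((hb1 (θ + x)).hasDerivAt).comp x (hshift x)
      simpa [Function.comp_def] using this
    exact ((h1.add h2).add_const (b θ)).sub h3
  have hdq' : ∀ x : ℝ, HasDerivAt (fun y => U * y + deriv b θ - deriv b (θ + y))
      (U - deriv (deriv b) (θ + x)) x := by
    intro x
    have h1 : HasDerivAt (fun y : ℝ => U * y) U x := by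
      simpa using (hasDerivAt_id x).const_mul U
    have h3 : HasDerivAt (fun y : ℝ => deriv b (θ + y)) (deriv (deriv b) (θ + x)) x := by
      have := ((hb2 (θ + x)).hasDerivAt).comp x (hshift x)
      simpa [Function.comp_def] using this
    exact (h1.add_const (deriv b θ)).sub h3
  have hmono : Monotone (fun x => U * x + deriv b θ - deriv b (θ + x)) := by
    apply monotone_of_deriv_nonneg
    · exact fun x => (hdq' x).differentiableAt
    · intro x
      rw [(hdq' x).deriv]
      linarith [hbU (θ + x)]
  have hq0 : q 0 = 0 := by simp [hq]
  have hderivq : ∀ x : ℝ, deriv q x = U * x + deriv b θ - deriv b (θ + x) :=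
    fun x => (hdq x).deriv
  have key : q 0 ≤ q h := by
    rcases le_total 0 h with hh | hh
    · have : MonotoneOn q (Set.Ici 0) := by
        apply monotoneOn_of_deriv_nonneg (convex_Ici 0)
          (Continuous.continuousOn (continuous_iff_continuousAt.2 fun x => (hdq x).continuousAt))
        · intro x hx
          exact ((hdq x).differentiableAt).differentiableWithinAt
        · intro x hx
          rw [hderivq x]
          have h0 : U * 0 + deriv b θ - deriv b (θ + 0) ≤ U * x + deriv b θ - deriv b (θ + x) :=
            hmono (le_of_lt (by simpa using hx))
          simp at h0
          linarith
      exact this (Set.self_mem_Ici) (by exact hh) hh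
    · have : AntitoneOn q (Set.Iic 0) := by
        apply antitoneOn_of_deriv_nonpos (convex_Iic 0)
          (Continuous.continuousOn (continuous_iff_continuousAt.2 fun x => (hdq x).continuousAt))
        · intro x hx
          exact ((hdq x).differentiableAt).differentiableWithinAt
        · intro x hx
          rw [hderivq x]
          have h0 : U * x + deriv b θ - deriv b (θ + x) ≤ U * 0 + deriv b θ - deriv b (θ + 0) :=
            hmono (le_of_lt (by simpa using hx))
          simp at h0
          linarith
      exact this (by exact hh) Set.self_mem_Iic hh
  rw [hq0] at key
  simp only [hq] at key
  linarith

/-- In a one-parameter exponential family with density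
`p(y|θ) = c(y,φ)exp((yθ − b(θ))/φ)` whose log-partition `b` satisfies `b'' ≤ U`,
the residual `ε = y − b'(θ)` is sub-Gaussian with variance proxy `φU`. -/
theorem stmt_0 (b c : ℝ → ℝ) (φ U θ : ℝ) (hφ : 0 < φ) (hU : 0 < U)
    (hb1 : Differentiable ℝ b) (hb2 : Differentiable ℝ (deriv b))
    (hbU : ∀ x : ℝ, deriv (deriv b) x ≤ U)
    (hnorm : ∀ s : ℝ, ∫ y : ℝ, c y * Real.exp ((y * s - b s) / φ) = 1)
    (hint : ∀ t : ℝ, Integrable (fun y : ℝ =>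
      c y * Real.exp ((y * θ - b θ) / φ) * Real.exp (t * (y - deriv b θ)))) :
    ∀ t : ℝ, (∫ y : ℝ, c y * Real.exp ((y * θ - b θ) / φ) * Real.exp (t * (y - deriv b θ)))
      ≤ Real.exp (φ * U * t ^ 2 / 2) := by
  intro t
  set s : ℝ := θ + t * φ with hs
  set K : ℝ := Real.exp ((b s - b θ) / φ - t * deriv b θ) with hK
  have hid : ∀ y : ℝ, c y * Real.exp ((y * θ - b θ) / φ) * Real.exp (t * (y - deriv b θ))
      = (c y * Real.exp ((y * s - b s) / φ)) * K := by
    intro y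
    rw [hK, mul_assoc, mul_assoc, ← Real.exp_add, ← Real.exp_add]
    congr 1
    rw [hs]
    field_simp
    ring
  have hint' : (∫ y : ℝ, c y * Real.exp ((y * θ - b θ) / φ) * Real.exp (t * (y - deriv b θ)))
      = K := by
    simp_rw [hid]
    rw [integral_mul_const, hnorm s, one_mul]
  rw [hint', hK]
  apply Real.exp_le_exp.mpr
  have htb := taylor_bd b U θ hb1 hb2 hbU (t * φ)
  rw [← hs] at htb
  rw [div_sub' hφ.ne', div_le_div_iff₀ hφ (by norm_num : (0:ℝ) < 2)]
  nlinarith [sq_nonneg t, sq_nonneg φ]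
end

section
/- Let U and Û be m×n real matrices with orthonormal columns (m > n), and let R be an m×m invertible matrix. If sinΘ(U, Û) ≤ L for some L ∈ [0,1], then sinΘ(span(RU), span(RÛ)) ≤ (σ_max(R)/σ_min(R))² · L. -/
open Real Matrix
open scoped RealInnerProductSpace

/-- Euclidean norm of a vector. -/
noncomputable def enorm' {n : ℕ} (v : Fin n → ℝ) : ℝ := Real.sqrt (∑ i, v i ^ 2)

/-- Smallest singular value: infimum of `‖Xv‖` over unit vectors `v`. -/
noncomputable def sigmaMin {d p : ℕ} (X : Matrix (Fin d) (Fin p) ℝ) : ℝ :=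
  sInf {r : ℝ | ∃ v : Fin p → ℝ, enorm' v = 1 ∧ r = enorm' (X.mulVec v)}

/-- Largest singular value: supremum of `‖Xv‖` over unit vectors `v`. -/
noncomputable def sigmaMax {d p : ℕ} (X : Matrix (Fin d) (Fin p) ℝ) : ℝ :=
  sSup {r : ℝ | ∃ v : Fin p → ℝ, enorm' v = 1 ∧ r = enorm' (X.mulVec v)}

/-- Column span of a matrix, as a subspace of Euclidean space. -/
noncomputable def colSpan {m n : ℕ} (A : Matrix (Fin m) (Fin n) ℝ) :
    Submodule ℝ (EuclideanSpace ℝ (Fin m)) :=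
  Submodule.span ℝ (Set.range fun i : Fin n => (WithLp.toLp 2 (fun j => A j i) : EuclideanSpace ℝ (Fin m)))

/-- Angle distance between two subspaces:
`sinΘ(S,T) = sup{⟨x,y⟩/(‖x‖‖y‖) : x ∈ S, y ∈ Tᗮ}`. -/
noncomputable def sinTheta {m : ℕ} (S T : Submodule ℝ (EuclideanSpace ℝ (Fin m))) : ℝ :=
  sSup {r : ℝ | ∃ x ∈ S, ∃ y ∈ Tᗮ, x ≠ 0 ∧ y ≠ 0 ∧ r = ⟪x, y⟫ / (‖x‖ * ‖y‖)}

def toE {m : ℕ} (v : Fin m → ℝ) : EuclideanSpace ℝ (Fin m) := WithLp.toLp 2 v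

lemma enorm_eq {m : ℕ} (v : Fin m → ℝ) : enorm' v = ‖toE v‖ := by
  rw [EuclideanSpace.norm_eq]
  simp [enorm', sq_abs, toE]

lemma inner_mulVec {m : ℕ} (M : Matrix (Fin m) (Fin m) ℝ) (x y : EuclideanSpace ℝ (Fin m)) :
    ⟪toE (M.mulVec x), y⟫ = ⟪x, toE (Mᵀ.mulVec y)⟫ := by
  simp only [PiLp.inner_apply, RCLike.inner_apply, conj_trivial, toE]
  simp only [Matrix.mulVec, dotProduct, Matrix.transpose_apply, Finset.sum_mul,
    Finset.mul_sum]
  rw [Finset.sum_comm]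
  exact Finset.sum_congr rfl fun i _ => Finset.sum_congr rfl fun j _ => by ring

lemma unit_exists {m : ℕ} (hm : 0 < m) : ∃ v : Fin m → ℝ, enorm' v = 1 := by
  refine ⟨fun i => if i = ⟨0, hm⟩ then (1:ℝ) else 0, ?_⟩
  unfold enorm'
  have h1 : ∑ i, (if i = (⟨0, hm⟩ : Fin m) then (1:ℝ) else 0) ^ 2 = 1 := by
    rw [Finset.sum_eq_single (⟨0, hm⟩ : Fin m)]
    · simp
    · intro b _ hb; simp [hb]
    · simp
  rw [h1, Real.sqrt_one]

lemma norm_mulVec_le {m : ℕ} (X : Matrix (Fin m) (Fin m) ℝ) :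
    ∃ C : ℝ, 0 ≤ C ∧ ∀ v : EuclideanSpace ℝ (Fin m), ‖toE (X.mulVec v)‖ ≤ C * ‖v‖ := by
  let f : EuclideanSpace ℝ (Fin m) →ₗ[ℝ] EuclideanSpace ℝ (Fin m) :=
    { toFun := fun v => toE (X.mulVec v)
      map_add' := fun a b => by
        show toE (X.mulVec (a + b)) = toE (X.mulVec a) + toE (X.mulVec b)
        unfold toE; rw [Matrix.mulVec_add, WithLp.toLp_add]
      map_smul' := fun c a => by
        show toE (X.mulVec (c • a)) = c • toE (X.mulVec a)
        unfold toE; rw [Matrix.mulVec_smul, WithLp.toLp_smul] }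
  let T := LinearMap.toContinuousLinearMap f
  exact ⟨‖T‖, norm_nonneg T, fun v => T.le_opNorm v⟩

lemma sMax_bddAbove {m : ℕ} (X : Matrix (Fin m) (Fin m) ℝ) :
    BddAbove {r : ℝ | ∃ v : Fin m → ℝ, enorm' v = 1 ∧ r = enorm' (X.mulVec v)} := by
  obtain ⟨C, hC0, hC⟩ := norm_mulVec_le X
  refine ⟨C, fun r hr => ?_⟩
  obtain ⟨v, hv, rfl⟩ := hr
  calc enorm' (X.mulVec v) = ‖toE (X.mulVec v)‖ := enorm_eq _
    _ ≤ C * ‖toE v‖ := hC (toE v)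
    _ = C := by rw [← enorm_eq, hv, mul_one]

lemma s_bddBelow {m : ℕ} (X : Matrix (Fin m) (Fin m) ℝ) :
    BddBelow {r : ℝ | ∃ v : Fin m → ℝ, enorm' v = 1 ∧ r = enorm' (X.mulVec v)} := by
  refine ⟨0, fun r hr => ?_⟩
  obtain ⟨v, hv, rfl⟩ := hr
  exact Real.sqrt_nonneg _

lemma s_nonempty {m : ℕ} (hm : 0 < m) (X : Matrix (Fin m) (Fin m) ℝ) :
    {r : ℝ | ∃ v : Fin m → ℝ, enorm' v = 1 ∧ r = enorm' (X.mulVec v)}.Nonempty := by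
  obtain ⟨v, hv⟩ := unit_exists hm
  exact ⟨_, v, hv, rfl⟩

lemma norm_smul_mulVec {m : ℕ} (X : Matrix (Fin m) (Fin m) ℝ) (c : ℝ)
    (v : EuclideanSpace ℝ (Fin m)) :
    ‖toE (X.mulVec (c • v))‖ = |c| * ‖toE (X.mulVec v)‖ := by
  have : toE (X.mulVec (c • v)) = c • toE (X.mulVec v) := by
    unfold toE; rw [Matrix.mulVec_smul, WithLp.toLp_smul]
  rw [this, norm_smul, Real.norm_eq_abs]

lemma le_sigmaMax {m : ℕ} (X : Matrix (Fin m) (Fin m) ℝ) (v : EuclideanSpace ℝ (Fin m)) :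
    ‖toE (X.mulVec v)‖ ≤ sigmaMax X * ‖v‖ := by
  by_cases hv : v = 0
  · subst hv
    have h00 : toE (X.mulVec (0 : EuclideanSpace ℝ (Fin m))) = 0 := by
      rw [WithLp.ofLp_zero, Matrix.mulVec_zero]; rfl
    rw [h00]; simp
  · have hvn : 0 < ‖v‖ := norm_pos_iff.2 hv
    set c : ℝ := ‖v‖⁻¹ with hc
    have hcpos : 0 < c := inv_pos.2 hvn
    have hunit : enorm' ((c • v : EuclideanSpace ℝ (Fin m)) : Fin m → ℝ) = 1 := by
      rw [enorm_eq]
      show ‖c • v‖ = 1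
      rw [norm_smul, Real.norm_eq_abs, abs_of_pos hcpos]
      exact inv_mul_cancel₀ hvn.ne'
    have hmem : enorm' (X.mulVec ((c • v : EuclideanSpace ℝ (Fin m)) : Fin m → ℝ)) ∈
        {r : ℝ | ∃ w : Fin m → ℝ, enorm' w = 1 ∧ r = enorm' (X.mulVec w)} :=
      ⟨_, hunit, rfl⟩
    have hle := le_csSup (sMax_bddAbove X) hmem
    rw [enorm_eq, WithLp.ofLp_smul, norm_smul_mulVec, abs_of_pos hcpos] at hle
    have : ‖toE (X.mulVec v)‖ = ‖v‖ * (c * ‖toE (X.mulVec v)‖) := by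
      rw [hc]; field_simp
    rw [this, mul_comm (sigmaMax X) ‖v‖]
    exact mul_le_mul_of_nonneg_left hle (le_of_lt hvn)

lemma sigmaMin_le {m : ℕ} (X : Matrix (Fin m) (Fin m) ℝ) (v : EuclideanSpace ℝ (Fin m)) :
    sigmaMin X * ‖v‖ ≤ ‖toE (X.mulVec v)‖ := by
  by_cases hv : v = 0
  · subst hv; simp
  · have hvn : 0 < ‖v‖ := norm_pos_iff.2 hv
    set c : ℝ := ‖v‖⁻¹ with hc
    have hcpos : 0 < c := inv_pos.2 hvn
    have hunit : enorm' ((c • v : EuclideanSpace ℝ (Fin m)) : Fin m → ℝ) = 1 := by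
      rw [enorm_eq]
      show ‖c • v‖ = 1
      rw [norm_smul, Real.norm_eq_abs, abs_of_pos hcpos]
      exact inv_mul_cancel₀ hvn.ne'
    have hmem : enorm' (X.mulVec ((c • v : EuclideanSpace ℝ (Fin m)) : Fin m → ℝ)) ∈
        {r : ℝ | ∃ w : Fin m → ℝ, enorm' w = 1 ∧ r = enorm' (X.mulVec w)} :=
      ⟨_, hunit, rfl⟩
    have hle := csInf_le (s_bddBelow X) hmem
    rw [enorm_eq, WithLp.ofLp_smul, norm_smul_mulVec, abs_of_pos hcpos] at hle
    have h2 : sigmaMin X ≤ c * ‖toE (X.mulVec v)‖ := hle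
    calc sigmaMin X * ‖v‖ ≤ (c * ‖toE (X.mulVec v)‖) * ‖v‖ :=
          mul_le_mul_of_nonneg_right h2 (le_of_lt hvn)
      _ = ‖toE (X.mulVec v)‖ := by rw [hc]; field_simp

lemma mulVec_mem_colSpan {m n : ℕ} (M : Matrix (Fin m) (Fin m) ℝ)
    (A : Matrix (Fin m) (Fin n) ℝ) (x : EuclideanSpace ℝ (Fin m)) (hx : x ∈ colSpan A) :
    toE (M.mulVec x) ∈ colSpan (M * A) := by
  induction hx using Submodule.span_induction with
  | mem z hz =>
    obtain ⟨i, rfl⟩ := hz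
    apply Submodule.subset_span
    refine ⟨i, ?_⟩
    ext j
    simp [toE, Matrix.mulVec, Matrix.mul_apply, dotProduct]
  | zero =>
    have h0 : toE (M.mulVec (0 : EuclideanSpace ℝ (Fin m))) = 0 := by
      rw [WithLp.ofLp_zero, Matrix.mulVec_zero]; rfl
    rw [h0]; exact Submodule.zero_mem _
  | add a b _ _ ha hb =>
    have : toE (M.mulVec (a + b)) = toE (M.mulVec a) + toE (M.mulVec b) := by
      unfold toE; rw [Matrix.mulVec_add, WithLp.toLp_add]
    rw [WithLp.ofLp_add, this]; exact Submodule.add_mem _ ha hb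
  | smul c a _ ha =>
    have : toE (M.mulVec (c • a)) = c • toE (M.mulVec a) := by
      unfold toE; rw [Matrix.mulVec_smul, WithLp.toLp_smul]
    rw [WithLp.ofLp_smul, this]; exact Submodule.smul_mem _ _ ha

lemma sigmaMin_pos {m : ℕ} (hm : 0 < m) (R : Matrix (Fin m) (Fin m) ℝ)
    (B : Matrix (Fin m) (Fin m) ℝ) (hB2 : B * R = 1) : 0 < sigmaMin R := by
  obtain ⟨C, hC0, hC⟩ := norm_mulVec_le B
  have key : ∀ v : Fin m → ℝ, enorm' v = 1 → 1 ≤ C * ‖toE (R.mulVec v)‖ := by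
    intro v hv
    have : B.mulVec (R.mulVec v) = v := by
      rw [Matrix.mulVec_mulVec, hB2, Matrix.one_mulVec]
    calc (1:ℝ) = ‖toE v‖ := by rw [← enorm_eq, hv]
      _ = ‖toE (B.mulVec (toE (R.mulVec v)))‖ := by rw [show B.mulVec (toE (R.mulVec v)) = v from this]
      _ ≤ C * ‖toE (R.mulVec v)‖ := hC _
  obtain ⟨v0, hv0⟩ := unit_exists hm
  have hCpos : 0 < C := by
    rcases lt_or_eq_of_le hC0 with h | h
    · exact h
    · exfalso; have := key v0 hv0; rw [← h] at this; linarith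
  have hlow : ∀ r ∈ {r : ℝ | ∃ v : Fin m → ℝ, enorm' v = 1 ∧ r = enorm' (R.mulVec v)}, C⁻¹ ≤ r := by
    rintro r ⟨v, hv, rfl⟩
    have h1 := key v hv
    rw [enorm_eq]
    rw [inv_le_iff_one_le_mul₀ hCpos]
    linarith [h1]
  have := le_csInf (s_nonempty hm R) hlow
  exact lt_of_lt_of_le (inv_pos.2 hCpos) this

lemma sigmaMin_le_sigmaMax {m : ℕ} (hm : 0 < m) (X : Matrix (Fin m) (Fin m) ℝ) :
    sigmaMin X ≤ sigmaMax X :=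
  csInf_le_csSup (s_nonempty hm X) (s_bddBelow X) (sMax_bddAbove X)

lemma sinTheta_set_bddAbove {m : ℕ} (S T : Submodule ℝ (EuclideanSpace ℝ (Fin m))) :
    BddAbove {r : ℝ | ∃ x ∈ S, ∃ y ∈ Tᗮ, x ≠ 0 ∧ y ≠ 0 ∧ r = ⟪x, y⟫ / (‖x‖ * ‖y‖)} := by
  refine ⟨1, ?_⟩
  rintro r ⟨x, _, y, _, hx0, hy0, rfl⟩
  apply div_le_one_of_le₀ (real_inner_le_norm x y)
  positivity

/-- angle distance under an invertible linear transformation `R`: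
if `sinΘ(U,Û) ≤ L` then `sinΘ(RU,RÛ) ≤ (σ_max(R)/σ_min(R))² L`. -/
theorem stmt_4 {m n : ℕ} (hmn : n < m) (U Uhat : Matrix (Fin m) (Fin n) ℝ)
    (hU : Uᵀ * U = 1) (hUhat : Uhatᵀ * Uhat = 1)
    (R : Matrix (Fin m) (Fin m) ℝ) (hR : IsUnit R)
    (L : ℝ) (hL : L ∈ Set.Icc (0 : ℝ) 1)
    (h : sinTheta (colSpan U) (colSpan Uhat) ≤ L) :
    sinTheta (colSpan (R * U)) (colSpan (R * Uhat)) ≤ (sigmaMax R / sigmaMin R) ^ 2 * L := by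
  obtain ⟨hL0, hL1⟩ := hL
  have hm : 0 < m := lt_of_le_of_lt (Nat.zero_le n) hmn
  have hdet : IsUnit R.det := (Matrix.isUnit_iff_isUnit_det R).1 hR
  obtain ⟨B, hB1, hB2⟩ : ∃ B, R * B = 1 ∧ B * R = 1 :=
    ⟨R⁻¹, Matrix.mul_nonsing_inv R hdet, Matrix.nonsing_inv_mul R hdet⟩
  have hσmin : 0 < sigmaMin R := sigmaMin_pos hm R B hB2
  have hσminmax : sigmaMin R ≤ sigmaMax R := sigmaMin_le_sigmaMax hm R
  have hk1 : 1 ≤ sigmaMax R / sigmaMin R := (one_le_div hσmin).2 hσminmax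
  unfold sinTheta
  apply Real.sSup_le
  · rintro r ⟨x, hx, y, hy, hx0, hy0, rfl⟩
    set u := toE (B.mulVec x) with hu_def
    set w := toE (Rᵀ.mulVec y) with hw_def
    have hu : u ∈ colSpan U := by
      have h1 := mulVec_mem_colSpan B (R * U) x hx
      have hBRU : B * (R * U) = U := by rw [← Matrix.mul_assoc, hB2, Matrix.one_mul]
      rwa [hBRU] at h1
    have hxu : x = toE (R.mulVec u) := by
      rw [hu_def]
      show x = toE (R.mulVec (B.mulVec x))
      rw [Matrix.mulVec_mulVec, hB1, Matrix.one_mulVec]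
      rfl
    have hw : w ∈ (colSpan Uhat)ᗮ := by
      rw [Submodule.mem_orthogonal]
      intro z hz
      have h2 := inner_mulVec R z y
      rw [← hw_def] at h2
      rw [← h2]
      exact (Submodule.mem_orthogonal _ y).1 hy _ (mulVec_mem_colSpan R Uhat z hz)
    have hu0 : u ≠ 0 := by
      intro h0
      apply hx0
      rw [hxu, h0]
      show toE (R.mulVec (0 : EuclideanSpace ℝ (Fin m))) = 0
      rw [WithLp.ofLp_zero, Matrix.mulVec_zero]; rfl
    have hw0 : w ≠ 0 := by
      intro h0
      apply hy0
      have hyw : y = toE (Bᵀ.mulVec w) := by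
        rw [hw_def]
        show y = toE (Bᵀ.mulVec (Rᵀ.mulVec y))
        have hBt : Bᵀ * Rᵀ = 1 := by rw [← Matrix.transpose_mul, hB1, Matrix.transpose_one]
        rw [Matrix.mulVec_mulVec, hBt, Matrix.one_mulVec]
        rfl
      rw [hyw, h0]
      show toE (Bᵀ.mulVec (0 : EuclideanSpace ℝ (Fin m))) = 0
      rw [WithLp.ofLp_zero, Matrix.mulVec_zero]; rfl
    have hinner : ⟪x, y⟫ = ⟪u, w⟫ := by
      conv_lhs => rw [hxu]
      have h3 := inner_mulVec R u y
      rw [← hw_def] at h3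
      exact h3
    have hun : 0 < ‖u‖ := norm_pos_iff.2 hu0
    have hwn : 0 < ‖w‖ := norm_pos_iff.2 hw0
    have hxn : 0 < ‖x‖ := norm_pos_iff.2 hx0
    have hyn : 0 < ‖y‖ := norm_pos_iff.2 hy0
    have hxb : sigmaMin R * ‖u‖ ≤ ‖x‖ := by
      conv_rhs => rw [hxu]
      exact sigmaMin_le R u
    have hyb : ‖w‖ ≤ sigmaMax R * ‖y‖ := by
      have h3 : ‖w‖ * ‖w‖ = ⟪w, w⟫ := (real_inner_self_eq_norm_mul_norm w).symm
      have h4 := inner_mulVec Rᵀ y w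
      rw [Matrix.transpose_transpose, ← hw_def] at h4
      have h5 : ⟪y, toE (R.mulVec w)⟫ ≤ ‖y‖ * ‖toE (R.mulVec w)‖ := real_inner_le_norm _ _
      have h6 : ‖toE (R.mulVec w)‖ ≤ sigmaMax R * ‖w‖ := le_sigmaMax R w
      have h7 : ⟪w, w⟫ = ⟪y, toE (R.mulVec w)⟫ := h4
      nlinarith [norm_nonneg (toE (R.mulVec w))]
    have hkey : ⟪u, w⟫ / (‖u‖ * ‖w‖) ≤ L := by
      refine le_trans (le_csSup (sinTheta_set_bddAbove (colSpan U) (colSpan Uhat)) ?_) h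
      exact ⟨u, hu, w, hw, hu0, hw0, rfl⟩
    have hstep1 : ⟪u, w⟫ ≤ L * (‖u‖ * ‖w‖) := by
      rw [div_le_iff₀ (by positivity)] at hkey
      linarith
    have huw : ‖u‖ * ‖w‖ ≤ (sigmaMax R / sigmaMin R) * (‖x‖ * ‖y‖) := by
      have h7 : ‖u‖ ≤ ‖x‖ / sigmaMin R := by rw [le_div_iff₀ hσmin]; linarith
      have h8 : ‖u‖ * ‖w‖ ≤ (‖x‖ / sigmaMin R) * (sigmaMax R * ‖y‖) :=
        mul_le_mul h7 hyb (le_of_lt hwn) (by positivity)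
      calc ‖u‖ * ‖w‖ ≤ (‖x‖ / sigmaMin R) * (sigmaMax R * ‖y‖) := h8
        _ = (sigmaMax R / sigmaMin R) * (‖x‖ * ‖y‖) := by field_simp
    rw [hinner, div_le_iff₀ (by positivity : (0:ℝ) < ‖x‖ * ‖y‖)]
    have hfinal : L * (‖u‖ * ‖w‖) ≤ (sigmaMax R / sigmaMin R) ^ 2 * L * (‖x‖ * ‖y‖) := by
      calc L * (‖u‖ * ‖w‖) ≤ L * ((sigmaMax R / sigmaMin R) * (‖x‖ * ‖y‖)) :=
            mul_le_mul_of_nonneg_left huw hL0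
        _ ≤ (sigmaMax R / sigmaMin R) ^ 2 * L * (‖x‖ * ‖y‖) := by
            nlinarith [mul_nonneg (mul_nonneg (mul_nonneg hL0 (sub_nonneg.2 hk1))
              (le_trans zero_le_one hk1)) (le_of_lt (mul_pos hxn hyn))]
    linarith
  · exact mul_nonneg (sq_nonneg _) hL0
end
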